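/- Let F have characteristic zero and let A be a ℤ₂-graded associative algebra. A multilinear ℤ₂-graded polynomial f is a graded polynomial identity of A if and only if f* is a graded polynomial identity of the Grassmann envelope G(A), where f* is obtained from f by multiplying each monomial by the sign of the permutation its odd variables induce. -/

import Mathlib

open scoped TensorProduct

noncomputable section

variable (F : Type*) [Field F]

/-- Grassmann (exterior) algebra on generators indexed by `ι`. -/
abbrev Grass (ι : Type*) := ExteriorAlgebra F (ι →₀ F)

/-- The parity (ℤ₂) grading of the Grassmann algebra. -/
def grassPart (ι : Type*) (i : ZMod 2) : Submodule F (Grass F ι) :=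
  CliffordAlgebra.evenOdd (0 : QuadraticForm F (ι →₀ F)) i

/-- The augmentation ideal of the Grassmann algebra: elements with zero constant term. -/
def grassStar (ι : Type*) : Submodule F (Grass F ι) :=
  LinearMap.ker (ExteriorAlgebra.algebraMapInv (M := ι →₀ F)).toLinearMap

/-- The image of `p ⊗ q` inside `A ⊗[F] B`. -/
def tensSub {A B : Type*} [Ring A] [Ring B] [Algebra F A] [Algebra F B]
    (p : Submodule F A) (q : Submodule F B) : Submodule F (A ⊗[F] B) :=
  LinearMap.range (TensorProduct.map p.subtype q.subtype)

/-- The Grassmann envelope `A⁰ ⊗ G⁰ ⊕ A¹ ⊗ G¹` of a ℤ₂-graded algebra. -/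
def grassEnv (A : Type*) [Ring A] [Algebra F A] (𝒜 : ZMod 2 → Submodule F A)
    (ι : Type*) : Submodule F (A ⊗[F] Grass F ι) :=
  tensSub F (𝒜 0) (grassPart F ι 0) ⊔ tensSub F (𝒜 1) (grassPart F ι 1)

/-- The Grassmann envelope without constant terms `(G*)⁰ ⊗ A⁰ ⊕ (G*)¹ ⊗ A¹`. -/
def grassEnvStar (A : Type*) [Ring A] [Algebra F A] (𝒜 : ZMod 2 → Submodule F A)
    (ι : Type*) : Submodule F (A ⊗[F] Grass F ι) :=
  tensSub F (𝒜 0) (grassStar F ι ⊓ grassPart F ι 0) ⊔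
    tensSub F (𝒜 1) (grassStar F ι ⊓ grassPart F ι 1)


/-- Number of odd positions strictly before position `p` in the shape `S`. -/
def oddRank {N : ℕ} (S : Fin N → Bool) (p : Fin N) : ℕ :=
  (Finset.univ.filter fun q => q < p ∧ S q = true).card

/-- Number of even positions strictly before position `p` in the shape `S`. -/
def evenRank {N : ℕ} (S : Fin N → Bool) (p : Fin N) : ℕ :=
  (Finset.univ.filter fun q => q < p ∧ S q = false).card

/-- The multilinear graded monomial `w₀ z_{σ(1)} w₁ ⋯ w_{s-1} z_{σ(s)} w_s` determined by
a shape `S` (telling which positions hold odd variables), an ordering `α` of the even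
variables (the word data `w`) and an ordering `σ` of the odd variables, evaluated at the
even values `u` and odd values `v`. -/
def monEval {B : Type*} [Ring B] (r s : ℕ) (S : Fin (r + s) → Bool)
    (α : Equiv.Perm (Fin r)) (σ : Equiv.Perm (Fin s)) (u : Fin r → B) (v : Fin s → B) : B :=
  (List.ofFn fun p : Fin (r + s) =>
    if S p then (if h : oddRank S p < s then v (σ ⟨oddRank S p, h⟩) else 1)
    else (if h : evenRank S p < r then u (α ⟨evenRank S p, h⟩) else 1)).prod

/-- Evaluation of the multilinear ℤ₂-graded polynomial
`f = Σ_w Σ_σ λ_{w,σ} w₀ z_{σ(1)} w₁ ⋯ z_{σ(s)} w_s` with coefficients `c = λ`. -/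
def gmlEval {B : Type*} [Ring B] [Algebra F B] (r s : ℕ)
    (c : (Fin (r + s) → Bool) → Equiv.Perm (Fin r) → Equiv.Perm (Fin s) → F)
    (u : Fin r → B) (v : Fin s → B) : B :=
  ∑ S : Fin (r + s) → Bool, ∑ α : Equiv.Perm (Fin r), ∑ σ : Equiv.Perm (Fin s),
    c S α σ • monEval r s S α σ u v

/-- The coefficients of `f*`: each term of `f` is multiplied by `sgn σ`, the sign of the
permutation of the odd variables. -/
def starCoeff {r s : ℕ}
    (c : (Fin (r + s) → Bool) → Equiv.Perm (Fin r) → Equiv.Perm (Fin s) → F) :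
    (Fin (r + s) → Bool) → Equiv.Perm (Fin r) → Equiv.Perm (Fin s) → F :=
  fun S α σ => ((Equiv.Perm.sign σ : ℤ) : F) * c S α σ

set_option linter.unusedSectionVars false

section AuxCliff

section Cliff
variable {R M : Type*} [CommRing R] [AddCommGroup M] [Module R M]

open CliffordAlgebra

theorem ι_anticomm (a b : M) :
    ι (0 : QuadraticForm R M) a * ι (0 : QuadraticForm R M) b = - (ι (0 : QuadraticForm R M) b * ι (0 : QuadraticForm R M) a) := by
  have h := ι_mul_ι_add_swap (Q := (0 : QuadraticForm R M)) a b
  have hp : QuadraticMap.polar (⇑(0 : QuadraticForm R M)) a b = 0 := by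
    simp [QuadraticMap.polar]
  rw [hp, map_zero] at h
  exact eq_neg_of_add_eq_zero_left h

theorem ι_mul_ι_central (a b : M) (z : CliffordAlgebra (0 : QuadraticForm R M)) :
    Commute (ι (0 : QuadraticForm R M) a * ι (0 : QuadraticForm R M) b) z := by
  induction z using CliffordAlgebra.induction with
  | algebraMap r => exact (Algebra.commute_algebraMap_right r _)
  | ι m =>
      unfold Commute SemiconjBy
      calc ι (0 : QuadraticForm R M) a * ι (0 : QuadraticForm R M) b * ι (0 : QuadraticForm R M) m
          = ι (0 : QuadraticForm R M) a * (ι (0 : QuadraticForm R M) b * ι (0 : QuadraticForm R M) m) := by noncomm_ring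
        _ = ι (0 : QuadraticForm R M) a * (-(ι (0 : QuadraticForm R M) m * ι (0 : QuadraticForm R M) b)) := by rw [← ι_anticomm]
        _ = -(ι (0 : QuadraticForm R M) a * ι (0 : QuadraticForm R M) m) * ι (0 : QuadraticForm R M) b := by noncomm_ring
        _ = (ι (0 : QuadraticForm R M) m * ι (0 : QuadraticForm R M) a) * ι (0 : QuadraticForm R M) b := by
              rw [ι_anticomm a m]; noncomm_ring
        _ = ι (0 : QuadraticForm R M) m * (ι (0 : QuadraticForm R M) a * ι (0 : QuadraticForm R M) b) := by noncomm_ring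
  | mul x y hx hy => exact hx.mul_right hy
  | add x y hx hy => exact hx.add_right hy

theorem even_central {x : CliffordAlgebra (0 : QuadraticForm R M)} (hx : x ∈ evenOdd (0 : QuadraticForm R M) 0)
    (z : CliffordAlgebra (0 : QuadraticForm R M)) : Commute x z := by
  induction x, hx using CliffordAlgebra.even_induction with
  | algebraMap r => exact Algebra.commute_algebraMap_left r z
  | add x y hx hy ihx ihy => exact ihx.add_left ihy
  | ι_mul_ι_mul a b x hx ih => exact (ι_mul_ι_central a b z).mul_left ih

theorem odd_anticomm {x y : CliffordAlgebra (0 : QuadraticForm R M)} (hx : x ∈ evenOdd (0 : QuadraticForm R M) 1)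
    (hy : y ∈ evenOdd (0 : QuadraticForm R M) 1) : x * y = - (y * x) := by
  induction x, hx using CliffordAlgebra.odd_induction with
  | ι v =>
      induction y, hy using CliffordAlgebra.odd_induction with
      | ι w => exact ι_anticomm v w
      | add x y hx hy ihx ihy => rw [mul_add, ihx, ihy, add_mul]; abel
      | ι_mul_ι_mul a b x hx ih =>
          have hc := ι_mul_ι_central (R := R) a b (ι (0 : QuadraticForm R M) v)
          calc ι (0 : QuadraticForm R M) v * (ι (0 : QuadraticForm R M) a * ι (0 : QuadraticForm R M) b * x)
              = (ι (0 : QuadraticForm R M) a * ι (0 : QuadraticForm R M) b) * (ι (0 : QuadraticForm R M) v * x) := by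
                rw [← mul_assoc, ← hc.eq]; noncomm_ring
            _ = (ι (0 : QuadraticForm R M) a * ι (0 : QuadraticForm R M) b) * (-(x * ι (0 : QuadraticForm R M) v)) := by rw [ih]
            _ = -(ι (0 : QuadraticForm R M) a * ι (0 : QuadraticForm R M) b * x * ι (0 : QuadraticForm R M) v) := by noncomm_ring
  | add x y hx hy ihx ihy => rw [add_mul, ihx, ihy, mul_add]; abel
  | ι_mul_ι_mul a b x hx ih =>
      have hc := ι_mul_ι_central (R := R) a b y
      calc ι (0 : QuadraticForm R M) a * ι (0 : QuadraticForm R M) b * x * y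
          = (ι (0 : QuadraticForm R M) a * ι (0 : QuadraticForm R M) b) * (x * y) := by noncomm_ring
        _ = (ι (0 : QuadraticForm R M) a * ι (0 : QuadraticForm R M) b) * (-(y * x)) := by rw [ih]
        _ = -(((ι (0 : QuadraticForm R M) a * ι (0 : QuadraticForm R M) b) * y) * x) := by noncomm_ring
        _ = -((y * (ι (0 : QuadraticForm R M) a * ι (0 : QuadraticForm R M) b)) * x) := by rw [← hc.eq]
        _ = -(y * (ι (0 : QuadraticForm R M) a * ι (0 : QuadraticForm R M) b * x)) := by noncomm_ring

end Cliff

end AuxCliff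

section AuxLists

section Lists
variable {B : Type*} [Ring B]


variable {B : Type*} [Ring B]

theorem anticomm_prod_left (a : B) (l : List B) (h : ∀ c ∈ l, a * c = -(c * a)) :
    a * l.prod = ((-1 : ℤ) ^ l.length) • (l.prod * a) := by
  induction l with
  | nil => simp
  | cons c t ih =>
      have hc := h c List.mem_cons_self
      have ht : ∀ x ∈ t, a * x = -(x * a) := fun x hx => h x (List.mem_cons_of_mem c hx)
      calc a * (c :: t).prod = (a * c) * t.prod := by rw [List.prod_cons, mul_assoc]
        _ = -(c * (a * t.prod)) := by rw [hc]; noncomm_ring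
        _ = -(c * ((-1 : ℤ) ^ t.length • (t.prod * a))) := by rw [ih ht]
        _ = (-1 : ℤ) ^ (t.length + 1) • ((c :: t).prod * a) := by
              rw [List.prod_cons, mul_smul_comm, pow_succ, mul_smul, mul_assoc]
              simp

theorem swap_middle (l₁ l₂ l₃ : List B) (a b : B) (hab : a * b = -(b * a))
    (ha : ∀ c ∈ l₂, a * c = -(c * a)) (hb : ∀ c ∈ l₂, b * c = -(c * b)) :
    (l₁ ++ b :: (l₂ ++ a :: l₃)).prod = - (l₁ ++ a :: (l₂ ++ b :: l₃)).prod := by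
  have hA := anticomm_prod_left a l₂ ha
  have hB := anticomm_prod_left b l₂ hb
  simp only [List.prod_append, List.prod_cons]
  have key : b * (l₂.prod * (a * l₃.prod)) = -(a * (l₂.prod * (b * l₃.prod))) := by
    have h1 : b * (l₂.prod * (a * l₃.prod)) =
        ((-1 : ℤ) ^ l₂.length) • (l₂.prod * (b * (a * l₃.prod))) := by
      rw [← mul_assoc, ← mul_assoc, hB]; simp [smul_mul_assoc, mul_assoc]
    have h2 : a * (l₂.prod * (b * l₃.prod)) =
        ((-1 : ℤ) ^ l₂.length) • (l₂.prod * (a * (b * l₃.prod))) := by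
      rw [← mul_assoc, ← mul_assoc, hA]; simp [smul_mul_assoc, mul_assoc]
    rw [h1, h2, ← smul_neg]
    congr 1
    have h3 : b * (a * l₃.prod) = -(a * (b * l₃.prod)) := by
      calc b * (a * l₃.prod) = (b * a) * l₃.prod := (mul_assoc _ _ _).symm
        _ = -((a * b) * l₃.prod) := by rw [hab]; simp
        _ = -(a * (b * l₃.prod)) := by rw [mul_assoc]
    rw [h3]; simp
  rw [key]; simp


theorem three_split (l : List B) {i j : ℕ} (hij : i < j) (hj : j < l.length) :
    l = l.take i ++ l[i] :: ((l.take j).drop (i + 1) ++ l[j] :: l.drop (j + 1)) := by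
  have hi : i < l.length := lt_trans hij hj
  have h2 : l.drop j = l[j] :: l.drop (j + 1) := List.drop_eq_getElem_cons hj
  have e2 : (l.take j).take (i + 1) = l.take (i + 1) := by
    rw [List.take_take, min_eq_left (by omega)]
  have e3 : l.take (i + 1) = l.take i ++ [l[i]] := by
    rw [List.take_succ, List.getElem?_eq_getElem hi]
    rfl
  have h3 : l.take j = l.take i ++ l[i] :: (l.take j).drop (i + 1) := by
    conv_lhs => rw [← List.take_append_drop (i + 1) (l.take j), e2, e3]
    rw [List.append_assoc]
    rfl
  conv_lhs => rw [← List.take_append_drop j l, h2, h3]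
  rw [List.append_assoc]
  rfl

theorem ofFn_swap_prod_aux {n : ℕ} (w : Fin n → B)
    (hw : ∀ i j : Fin n, i ≠ j → w i * w j = -(w j * w i)) (x y : Fin n) (h : x < y) :
    (List.ofFn (w ∘ Equiv.swap x y)).prod = - (List.ofFn w).prod := by
  set w' : Fin n → B := w ∘ Equiv.swap x y with hw'
  have hxy : x ≠ y := Fin.ne_of_lt h
  have hij : (x : ℕ) < (y : ℕ) := h
  have hjl : (y : ℕ) < (List.ofFn w).length := by simp [y.isLt]
  have hjl' : (y : ℕ) < (List.ofFn w').length := by simp [y.isLt]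
  have hil : (x : ℕ) < (List.ofFn w).length := lt_trans hij hjl
  have hil' : (x : ℕ) < (List.ofFn w').length := lt_trans hij hjl'
  -- entries
  have entry : ∀ (k : ℕ) (hk : k < n), (List.ofFn w)[k]'(by simpa using hk) = w ⟨k, hk⟩ := by
    intro k hk; simp
  have entry' : ∀ (k : ℕ) (hk : k < n), (List.ofFn w')[k]'(by simpa using hk) = w' ⟨k, hk⟩ := by
    intro k hk; simp
  have hfix : ∀ (k : ℕ) (hk : k < n), k ≠ (x : ℕ) → k ≠ (y : ℕ) → w' ⟨k, hk⟩ = w ⟨k, hk⟩ := by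
    intro k hk h1 h2
    have : Equiv.swap x y ⟨k, hk⟩ = ⟨k, hk⟩ :=
      Equiv.swap_apply_of_ne_of_ne (by simp [Fin.ext_iff, h1]) (by simp [Fin.ext_iff, h2])
    simp [hw', this]
  -- segments agree
  have T1 : (List.ofFn w').take (x : ℕ) = (List.ofFn w).take (x : ℕ) := by
    apply List.ext_getElem
    · simp
    · intro k h1 h2
      have hk : k < n := by simp at h1; omega
      rw [List.getElem_take, List.getElem_take, entry k hk, entry' k hk]
      have hkx : k < (x : ℕ) := by simpa using h1
      exact hfix k hk (by omega) (by omega)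
  have M : ((List.ofFn w').take (y : ℕ)).drop ((x : ℕ) + 1)
      = ((List.ofFn w).take (y : ℕ)).drop ((x : ℕ) + 1) := by
    apply List.ext_getElem
    · simp
    · intro k h1 h2
      have hb : (x : ℕ) + 1 + k < (y : ℕ) := by
        simp [List.length_drop, List.length_take] at h1
        omega
      have hk : (x : ℕ) + 1 + k < n := lt_trans hb y.isLt
      rw [List.getElem_drop, List.getElem_take, List.getElem_drop, List.getElem_take,
        entry _ hk, entry' _ hk]
      exact hfix _ hk (by omega) (by omega)
  have T3 : (List.ofFn w').drop ((y : ℕ) + 1) = (List.ofFn w).drop ((y : ℕ) + 1) := by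
    apply List.ext_getElem
    · simp
    · intro k h1 h2
      have hk : (y : ℕ) + 1 + k < n := by simp [List.length_drop] at h1; omega
      rw [List.getElem_drop, List.getElem_drop, entry _ hk, entry' _ hk]
      exact hfix _ hk (by omega) (by omega)
  -- distinguished entries
  have ex' : (List.ofFn w')[(x : ℕ)]'hil' = w y := by
    rw [entry' _ x.isLt, Fin.eta x x.isLt]
    simp [hw']
  have ey' : (List.ofFn w')[(y : ℕ)]'hjl' = w x := by
    rw [entry' _ y.isLt, Fin.eta y y.isLt]
    simp [hw']
  have ex : (List.ofFn w)[(x : ℕ)]'hil = w x := by rw [entry _ x.isLt]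
  have ey : (List.ofFn w)[(y : ℕ)]'hjl = w y := by rw [entry _ y.isLt]
  -- decompose both lists
  have D' := three_split (List.ofFn w') hij hjl'
  have D := three_split (List.ofFn w) hij hjl
  rw [ex', ey', T1, M, T3] at D'
  rw [ex, ey] at D
  rw [D']
  conv_rhs => rw [D]
  exact swap_middle _ _ _ (w x) (w y) (hw x y hxy)
    (by
      intro cc hc
      rw [List.mem_iff_getElem] at hc
      obtain ⟨k, hk, rfl⟩ := hc
      have hb : (x : ℕ) + 1 + k < (y : ℕ) := by
        simp [List.length_drop, List.length_take] at hk
        omega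
      have hkn : (x : ℕ) + 1 + k < n := lt_trans hb y.isLt
      rw [List.getElem_drop, List.getElem_take, entry _ hkn]
      exact hw x ⟨_, hkn⟩ (by simp [Fin.ext_iff]; omega))
    (by
      intro cc hc
      rw [List.mem_iff_getElem] at hc
      obtain ⟨k, hk, rfl⟩ := hc
      have hb : (x : ℕ) + 1 + k < (y : ℕ) := by
        simp [List.length_drop, List.length_take] at hk
        omega
      have hkn : (x : ℕ) + 1 + k < n := lt_trans hb y.isLt
      rw [List.getElem_drop, List.getElem_take, entry _ hkn]
      exact hw y ⟨_, hkn⟩ (by simp [Fin.ext_iff]; omega))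

theorem ofFn_swap_prod {n : ℕ} (w : Fin n → B)
    (hw : ∀ i j : Fin n, i ≠ j → w i * w j = -(w j * w i)) (x y : Fin n) (hxy : x ≠ y) :
    (List.ofFn (w ∘ Equiv.swap x y)).prod = - (List.ofFn w).prod := by
  rcases lt_or_gt_of_ne hxy with h | h
  · exact ofFn_swap_prod_aux w hw x y h
  · rw [Equiv.swap_comm]
    exact ofFn_swap_prod_aux w hw y x h

theorem ofFn_perm_prod {n : ℕ} (w : Fin n → B)
    (hw : ∀ i j : Fin n, i ≠ j → w i * w j = -(w j * w i)) (σ : Equiv.Perm (Fin n)) :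
    (List.ofFn (w ∘ σ)).prod = ((Equiv.Perm.sign σ : ℤ)) • (List.ofFn w).prod := by
  refine Equiv.Perm.swap_induction_on' σ (by simp [Function.comp_def]) ?_
  intro σ x y hxy ih
  have hcomp : w ∘ (σ * Equiv.swap x y) = (w ∘ σ) ∘ Equiv.swap x y := rfl
  have hw' : ∀ i j : Fin n, i ≠ j → (w ∘ σ) i * (w ∘ σ) j = -((w ∘ σ) j * (w ∘ σ) i) := by
    intro i j hij
    exact hw (σ i) (σ j) (fun hh => hij (σ.injective hh))
  rw [hcomp, ofFn_swap_prod (w ∘ σ) hw' x y hxy, ih]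
  simp [Equiv.Perm.sign_mul, Equiv.Perm.sign_swap hxy]

end Lists

end AuxLists


def oddCount {N : ℕ} (S : Fin N → Bool) : ℕ := (Finset.univ.filter fun q => S q = true).card
def evenCount {N : ℕ} (S : Fin N → Bool) : ℕ := (Finset.univ.filter fun q => S q = false).card

theorem oddRank_zero {N : ℕ} (S : Fin (N + 1) → Bool) : oddRank S 0 = 0 := by
  unfold oddRank
  rw [Finset.card_eq_zero, Finset.filter_eq_empty_iff]
  intro q _ hq
  exact absurd hq.1 (by simp [Fin.not_lt, Fin.zero_le])

theorem evenRank_zero {N : ℕ} (S : Fin (N + 1) → Bool) : evenRank S 0 = 0 := by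
  unfold evenRank
  rw [Finset.card_eq_zero, Finset.filter_eq_empty_iff]
  intro q _ hq
  exact absurd hq.1 (by simp [Fin.not_lt, Fin.zero_le])

theorem oddRank_succ {N : ℕ} (S : Fin (N + 1) → Bool) (p : Fin N) :
    oddRank S p.succ = (if S 0 then 1 else 0) + oddRank (S ∘ Fin.succ) p := by
  unfold oddRank
  rw [Finset.card_filter, Finset.card_filter, Fin.sum_univ_succ]
  congr 1
  · simp [Fin.succ_pos]
  · apply Finset.sum_congr rfl
    intro q _
    simp [Fin.succ_lt_succ_iff]

theorem evenRank_succ {N : ℕ} (S : Fin (N + 1) → Bool) (p : Fin N) :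
    evenRank S p.succ = (if S 0 then 0 else 1) + evenRank (S ∘ Fin.succ) p := by
  unfold evenRank
  rw [Finset.card_filter, Finset.card_filter, Fin.sum_univ_succ]
  congr 1
  · by_cases h0 : S 0 <;> simp [Fin.succ_pos, h0]
  · apply Finset.sum_congr rfl
    intro q _
    simp [Fin.succ_lt_succ_iff]

theorem oddCount_succ {N : ℕ} (S : Fin (N + 1) → Bool) :
    oddCount S = (if S 0 then 1 else 0) + oddCount (S ∘ Fin.succ) := by
  unfold oddCount
  rw [Finset.card_filter, Finset.card_filter, Fin.sum_univ_succ]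
  rfl

theorem evenCount_succ {N : ℕ} (S : Fin (N + 1) → Bool) :
    evenCount S = (if S 0 then 0 else 1) + evenCount (S ∘ Fin.succ) := by
  unfold evenCount
  rw [Finset.card_filter, Finset.card_filter, Fin.sum_univ_succ]
  by_cases h0 : S 0 <;> simp [h0]

theorem prod_split {B : Type*} [Ring B] : ∀ {N : ℕ} (S : Fin N → Bool) (g h : ℕ → B),
    (∀ i z, Commute (g i) z) →
    (List.ofFn fun p => if S p then h (oddRank S p) else g (evenRank S p)).prod
      = ((List.range (evenCount S)).map g).prod * ((List.range (oddCount S)).map h).prod := by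
  intro N
  induction N with
  | zero =>
      intro S g h hg
      have h1 : oddCount S = 0 := by simp [oddCount]
      have h2 : evenCount S = 0 := by simp [evenCount]
      simp [h1, h2]
  | succ N ih =>
      intro S g h hg
      rw [List.ofFn_succ]
      by_cases h0 : S 0
      · have htail : (fun p : Fin N => if S p.succ then h (oddRank S p.succ)
            else g (evenRank S p.succ)) = (fun p : Fin N => if (S ∘ Fin.succ) p then
              (fun k => h (1 + k)) (oddRank (S ∘ Fin.succ) p)
              else g (evenRank (S ∘ Fin.succ) p)) := by
          funext p
          rw [oddRank_succ, evenRank_succ, if_pos h0, if_pos h0, zero_add]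
          rfl
        have hhead : (if S (0 : Fin (N + 1)) then h (oddRank S 0) else g (evenRank S 0)) = h 0 := by
          rw [if_pos h0, oddRank_zero]
        rw [List.prod_cons, hhead, htail, ih (S ∘ Fin.succ) g (fun k => h (1 + k)) hg]
        rw [evenCount_succ S, oddCount_succ S, if_pos h0, if_pos h0, zero_add]
        have hmap : (List.range (1 + oddCount (S ∘ Fin.succ))).map h
            = h 0 :: (List.range (oddCount (S ∘ Fin.succ))).map (fun k => h (1 + k)) := by
          rw [Nat.add_comm 1, List.range_succ_eq_map, List.map_cons, List.map_map]
          congr 1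
          apply List.map_congr_left
          intro a _
          simp [Nat.add_comm]
        rw [hmap, List.prod_cons]
        have hcomm : Commute (h 0) ((List.range (evenCount (S ∘ Fin.succ))).map g).prod := by
          apply Commute.list_prod_right
          intro y hy
          rw [List.mem_map] at hy
          obtain ⟨i, _, rfl⟩ := hy
          exact (hg i (h 0)).symm
        rw [← mul_assoc, hcomm.eq, mul_assoc]
      · have htail : (fun p : Fin N => if S p.succ then h (oddRank S p.succ)
            else g (evenRank S p.succ)) = (fun p : Fin N => if (S ∘ Fin.succ) p then
              h (oddRank (S ∘ Fin.succ) p)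
              else (fun k => g (1 + k)) (evenRank (S ∘ Fin.succ) p)) := by
          funext p
          rw [oddRank_succ, evenRank_succ, if_neg h0, if_neg h0, zero_add]
          rfl
        have hhead : (if S (0 : Fin (N + 1)) then h (oddRank S 0) else g (evenRank S 0)) = g 0 := by
          rw [if_neg h0, evenRank_zero]
        have hg' : ∀ i z, Commute ((fun k => g (1 + k)) i) z := fun i z => hg (1 + i) z
        rw [List.prod_cons, hhead, htail, ih (S ∘ Fin.succ) (fun k => g (1 + k)) h hg']
        rw [evenCount_succ S, oddCount_succ S, if_neg h0, if_neg h0, zero_add]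
        have hmap : (List.range (1 + evenCount (S ∘ Fin.succ))).map g
            = g 0 :: (List.range (evenCount (S ∘ Fin.succ))).map (fun k => g (1 + k)) := by
          rw [Nat.add_comm 1, List.range_succ_eq_map, List.map_cons, List.map_map]
          congr 1
          apply List.map_congr_left
          intro a _
          simp [Nat.add_comm]
        rw [hmap, List.prod_cons, mul_assoc]



section AuxMore

variable {B : Type*} [Ring B]

theorem ofFn_perm_prod_comm {n : ℕ} (w : Fin n → B)
    (hw : ∀ i j, Commute (w i) (w j)) (α : Equiv.Perm (Fin n)) :
    (List.ofFn (w ∘ α)).prod = (List.ofFn w).prod := by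
  have h1 : List.ofFn (w ∘ ⇑α) = (List.ofFn ⇑α).map w := List.map_ofFn.symm
  have h2 : List.ofFn w = (List.finRange n).map w := List.ofFn_eq_map
  have hp : List.Perm (List.ofFn ⇑α) (List.finRange n) := by
    apply List.perm_of_nodup_nodup_toFinset_eq
    · exact (List.nodup_ofFn).mpr α.injective
    · exact List.nodup_finRange n
    · ext q
      simp [List.mem_ofFn]
      exact α.surjective q
  rw [h1, h2]
  refine List.Perm.prod_eq' (hp.map w) ?_
  rw [List.pairwise_map]
  exact List.pairwise_of_forall_mem_list fun a _ b _ => hw a b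

theorem ofFn_tmul_prod {A G : Type*} [Ring A] [Ring G] [Algebra F A] [Algebra F G] :
    ∀ {n : ℕ} (f : Fin n → A) (g : Fin n → G),
    (List.ofFn fun p => f p ⊗ₜ[F] g p).prod = (List.ofFn f).prod ⊗ₜ[F] (List.ofFn g).prod := by
  intro n
  induction n with
  | zero => intro f g; simp [Algebra.TensorProduct.one_def]
  | succ n ih =>
      intro f g
      rw [List.ofFn_succ, List.ofFn_succ, List.ofFn_succ, List.prod_cons, List.prod_cons,
        List.prod_cons, ih, Algebra.TensorProduct.tmul_mul_tmul]

theorem oddCount_add_evenCount {N : ℕ} (S : Fin N → Bool) :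
    oddCount S + evenCount S = N := by
  unfold oddCount evenCount
  have := Finset.card_filter_add_card_filter_not
    (s := (Finset.univ : Finset (Fin N))) (p := fun q => S q = true)
  rw [Finset.card_univ, Fintype.card_fin] at this
  have h2 : (Finset.filter (fun a => ¬ S a = true) Finset.univ).card
      = (Finset.filter (fun q => S q = false) Finset.univ).card := by
    congr 1
    apply Finset.filter_congr
    intro q _
    simp
  omega

theorem oddRank_lt {N : ℕ} (S : Fin N → Bool) (p : Fin N) (hp : S p = true) :
    oddRank S p < oddCount S := by
  apply Finset.card_lt_card
  refine (Finset.ssubset_iff_of_subset ?_).mpr ⟨p, by simp [hp], by simp⟩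
  intro q hq
  simp only [Finset.mem_filter] at hq ⊢
  exact ⟨hq.1, hq.2.2⟩

theorem evenRank_lt {N : ℕ} (S : Fin N → Bool) (p : Fin N) (hp : S p = false) :
    evenRank S p < evenCount S := by
  apply Finset.card_lt_card
  refine (Finset.ssubset_iff_of_subset ?_).mpr ⟨p, by simp [hp], by simp⟩
  intro q hq
  simp only [Finset.mem_filter] at hq ⊢
  exact ⟨hq.1, hq.2.2⟩

theorem oddRank_lt_oddRank {N : ℕ} (S : Fin N → Bool) {p p' : Fin N} (h : p < p')
    (hp : S p = true) : oddRank S p < oddRank S p' := by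
  apply Finset.card_lt_card
  refine (Finset.ssubset_iff_of_subset ?_).mpr ⟨p, by simp [hp, h], by simp⟩
  intro q hq
  simp only [Finset.mem_filter] at hq ⊢
  exact ⟨hq.1, lt_trans hq.2.1 h, hq.2.2⟩

theorem evenRank_lt_evenRank {N : ℕ} (S : Fin N → Bool) {p p' : Fin N} (h : p < p')
    (hp : S p = false) : evenRank S p < evenRank S p' := by
  apply Finset.card_lt_card
  refine (Finset.ssubset_iff_of_subset ?_).mpr ⟨p, by simp [hp, h], by simp⟩
  intro q hq
  simp only [Finset.mem_filter] at hq ⊢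
  exact ⟨hq.1, lt_trans hq.2.1 h, hq.2.2⟩

/-- The bijection between positions and (even index) ⊕ (odd index). -/
def shapeEquiv {r s : ℕ} (S : Fin (r + s) → Bool) (hS : oddCount S = s) :
    Fin (r + s) ≃ (Fin r ⊕ Fin s) :=
  Equiv.ofBijective (fun p =>
    if hp : S p = true then Sum.inr ⟨oddRank S p, lt_of_lt_of_eq (oddRank_lt S p hp) hS⟩
    else Sum.inl ⟨evenRank S p, by
      have hr : evenCount S = r := by have := oddCount_add_evenCount S; omega
      exact lt_of_lt_of_eq (evenRank_lt S p (by simpa using hp)) hr⟩) <| by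
    rw [Fintype.bijective_iff_injective_and_card]
    refine ⟨?_, by simp⟩
    intro p p' hpp
    by_cases h1 : S p = true <;> by_cases h2 : S p' = true <;>
      simp only [h1, h2, dif_pos, dif_neg, Bool.not_eq_true] at hpp
    · rcases lt_trichotomy p p' with h | h | h
      · exact absurd (congrArg Fin.val (Sum.inr.inj hpp))
          (Nat.ne_of_lt (oddRank_lt_oddRank S h h1))
      · exact h
      · exact absurd (congrArg Fin.val (Sum.inr.inj hpp)).symm
          (Nat.ne_of_lt (oddRank_lt_oddRank S h h2))
    · exact absurd hpp (by simp)
    · exact absurd hpp (by simp)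
    · rcases lt_trichotomy p p' with h | h | h
      · exact absurd (congrArg Fin.val (Sum.inl.inj hpp))
          (Nat.ne_of_lt (evenRank_lt_evenRank S h (by simpa using h1)))
      · exact h
      · exact absurd (congrArg Fin.val (Sum.inl.inj hpp)).symm
          (Nat.ne_of_lt (evenRank_lt_evenRank S h (by simpa using h2)))

theorem shapeEquiv_apply {r s : ℕ} (S : Fin (r + s) → Bool) (hS : oddCount S = s) (p) :
    shapeEquiv S hS p = if hp : S p = true
      then Sum.inr ⟨oddRank S p, lt_of_lt_of_eq (oddRank_lt S p hp) hS⟩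
      else Sum.inl ⟨evenRank S p, by
        have hr : evenCount S = r := by have := oddCount_add_evenCount S; omega
        exact lt_of_lt_of_eq (evenRank_lt S p (by simpa using hp)) hr⟩ := rfl

variable [Algebra F B]

/-- The monomial as a multilinear map. -/
def monMap {r s : ℕ} (S : Fin (r + s) → Bool) (hS : oddCount S = s)
    (α : Equiv.Perm (Fin r)) (σ : Equiv.Perm (Fin s)) :
    MultilinearMap F (fun _ : Fin r ⊕ Fin s => B) B :=
  ((MultilinearMap.mkPiAlgebraFin F (r + s) B).domDomCongr (shapeEquiv S hS)).domDomCongr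
    (Equiv.sumCongr α σ)

theorem monMap_apply {r s : ℕ} (S : Fin (r + s) → Bool) (hS : oddCount S = s)
    (α : Equiv.Perm (Fin r)) (σ : Equiv.Perm (Fin s)) (u : Fin r → B) (v : Fin s → B) :
    monMap F S hS α σ (Sum.elim u v) = monEval r s S α σ u v := by
  unfold monMap monEval
  rw [MultilinearMap.domDomCongr_apply, MultilinearMap.domDomCongr_apply,
    MultilinearMap.mkPiAlgebraFin_apply]
  congr 1
  apply congrArg
  funext p
  rw [shapeEquiv_apply]
  by_cases hp : S p = true
  · rw [dif_pos hp, if_pos hp, dif_pos (lt_of_lt_of_eq (oddRank_lt S p hp) hS)]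
    rfl
  · rw [dif_neg hp, if_neg hp]
    have hr : evenCount S = r := by have := oddCount_add_evenCount S; omega
    rw [dif_pos (lt_of_lt_of_eq (evenRank_lt S p (by simpa using hp)) hr)]
    rfl

/-- The full graded multilinear polynomial as a multilinear map. -/
def gmlMap (r s : ℕ)
    (c : (Fin (r + s) → Bool) → Equiv.Perm (Fin r) → Equiv.Perm (Fin s) → F) :
    MultilinearMap F (fun _ : Fin r ⊕ Fin s => B) B :=
  ∑ S : Fin (r + s) → Bool, ∑ α : Equiv.Perm (Fin r), ∑ σ : Equiv.Perm (Fin s),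
    c S α σ • (if hS : oddCount S = s then monMap F S hS α σ else 0)

theorem gmlEval_eq_gmlMap {r s : ℕ}
    {c : (Fin (r + s) → Bool) → Equiv.Perm (Fin r) → Equiv.Perm (Fin s) → F}
    (hc : ∀ S α σ, c S α σ ≠ 0 → oddCount S = s) (u : Fin r → B) (v : Fin s → B) :
    gmlEval F r s c u v = gmlMap F r s c (Sum.elim u v) := by
  unfold gmlEval gmlMap
  rw [MultilinearMap.sum_apply]
  apply Finset.sum_congr rfl
  intro S _
  rw [MultilinearMap.sum_apply]
  apply Finset.sum_congr rfl
  intro α _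
  rw [MultilinearMap.sum_apply]
  apply Finset.sum_congr rfl
  intro σ _
  rw [MultilinearMap.smul_apply]
  by_cases hcz : c S α σ = 0
  · rw [hcz, zero_smul, zero_smul]
  · rw [dif_pos (hc S α σ hcz), monMap_apply]

end AuxMore


section AuxEval

theorem monEval_tmul {A G : Type*} [Ring A] [Ring G] [Algebra F A] [Algebra F G]
    (r s : ℕ) (S : Fin (r + s) → Bool) (α : Equiv.Perm (Fin r)) (σ : Equiv.Perm (Fin s))
    (a : Fin r → A) (b : Fin s → A) (g : Fin r → G) (h : Fin s → G) :
    monEval r s S α σ (fun i => a i ⊗ₜ[F] g i) (fun j => b j ⊗ₜ[F] h j)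
      = monEval r s S α σ a b ⊗ₜ[F] monEval r s S α σ g h := by
  unfold monEval
  rw [← ofFn_tmul_prod]
  congr 1
  apply congrArg
  funext p
  by_cases hp : S p = true
  · rw [if_pos hp, if_pos hp, if_pos hp]
    by_cases hlt : oddRank S p < s
    · rw [dif_pos hlt, dif_pos hlt, dif_pos hlt]
    · rw [dif_neg hlt, dif_neg hlt, dif_neg hlt, Algebra.TensorProduct.one_def]
  · rw [if_neg hp, if_neg hp, if_neg hp]
    by_cases hlt : evenRank S p < r
    · rw [dif_pos hlt, dif_pos hlt, dif_pos hlt]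
    · rw [dif_neg hlt, dif_neg hlt, dif_neg hlt, Algebra.TensorProduct.one_def]

theorem monEval_grass (r s : ℕ) (S : Fin (r + s) → Bool) (hS : oddCount S = s)
    (α : Equiv.Perm (Fin r)) (σ : Equiv.Perm (Fin s))
    (g : Fin r → Grass F ℕ) (h : Fin s → Grass F ℕ)
    (hg : ∀ i, g i ∈ grassPart F ℕ 0) (hh : ∀ j, h j ∈ grassPart F ℕ 1) :
    monEval r s S α σ g h
      = (Equiv.Perm.sign σ : ℤ) • ((List.ofFn g).prod * (List.ofFn h).prod) := by
  have hr : evenCount S = r := by have := oddCount_add_evenCount S; omega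
  have hgc : ∀ i z, Commute (g i) z := fun i z => even_central (hg i) z
  have hcomm : ∀ i j, Commute (g i) (g j) := fun i j => hgc i (g j)
  have hanti : ∀ i j : Fin s, i ≠ j → h i * h j = -(h j * h i) := fun i j _ =>
    odd_anticomm (hh i) (hh j)
  unfold monEval
  set G' : ℕ → Grass F ℕ := fun k => if hk : k < r then g (α ⟨k, hk⟩) else 1 with hG'
  set H : ℕ → Grass F ℕ := fun k => if hk : k < s then h (σ ⟨k, hk⟩) else 1 with hH
  have hGc : ∀ i z, Commute (G' i) z := by
    intro i z
    show Commute (if hk : i < r then g (α ⟨i, hk⟩) else 1) z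
    by_cases hk : i < r
    · rw [dif_pos hk]; exact hgc _ z
    · rw [dif_neg hk]; exact Commute.one_left z
  have hbody : (fun p : Fin (r + s) =>
      if S p = true then (if hq : oddRank S p < s then h (σ ⟨oddRank S p, hq⟩) else 1)
      else (if hq : evenRank S p < r then g (α ⟨evenRank S p, hq⟩) else 1))
      = fun p => if S p = true then H (oddRank S p) else G' (evenRank S p) := rfl
  rw [hbody, prod_split S G' H hGc, hr, hS]
  have e1 : (List.range r).map G' = List.ofFn (g ∘ ⇑α) := by
    rw [← List.map_coe_finRange_eq_range, List.map_map, List.ofFn_eq_map]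
    apply List.map_congr_left
    intro q _
    simp [hG']
  have e2 : (List.range s).map H = List.ofFn (h ∘ ⇑σ) := by
    rw [← List.map_coe_finRange_eq_range, List.map_map, List.ofFn_eq_map]
    apply List.map_congr_left
    intro q _
    simp [hH]
  rw [e1, e2, ofFn_perm_prod_comm g hcomm α, ofFn_perm_prod h hanti σ, mul_smul_comm]

theorem gmlEval_pure {A : Type*} [Ring A] [Algebra F A] (r s : ℕ)
    (c : (Fin (r + s) → Bool) → Equiv.Perm (Fin r) → Equiv.Perm (Fin s) → F)
    (hc : ∀ S α σ, c S α σ ≠ 0 → oddCount S = s)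
    (a : Fin r → A) (b : Fin s → A) (g : Fin r → Grass F ℕ) (h : Fin s → Grass F ℕ)
    (hg : ∀ i, g i ∈ grassPart F ℕ 0) (hh : ∀ j, h j ∈ grassPart F ℕ 1) :
    gmlEval F r s (starCoeff F c) (fun i => a i ⊗ₜ[F] g i) (fun j => b j ⊗ₜ[F] h j)
      = gmlEval F r s c a b ⊗ₜ[F] ((List.ofFn g).prod * (List.ofFn h).prod) := by
  unfold gmlEval
  rw [TensorProduct.sum_tmul]
  apply Finset.sum_congr rfl
  intro S _
  rw [TensorProduct.sum_tmul]
  apply Finset.sum_congr rfl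
  intro α _
  rw [TensorProduct.sum_tmul]
  apply Finset.sum_congr rfl
  intro σ _
  rw [← TensorProduct.smul_tmul']
  by_cases hcz : c S α σ = 0
  · have h0 : starCoeff F c S α σ = 0 := by simp [starCoeff, hcz]
    rw [h0, hcz, zero_smul, zero_smul]
  · have hS : oddCount S = s := hc S α σ hcz
    rw [monEval_tmul, monEval_grass F r s S hS α σ g h hg hh, TensorProduct.tmul_smul,
      ← Int.cast_smul_eq_zsmul F, smul_smul, starCoeff]
    congr 1
    have hu : ((Equiv.Perm.sign σ : ℤ) : F) * ((Equiv.Perm.sign σ : ℤ) : F) = 1 := by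
      rcases Int.units_eq_one_or (Equiv.Perm.sign σ) with hs | hs <;> rw [hs] <;> norm_num
    calc ((Equiv.Perm.sign σ : ℤ) : F) * c S α σ * ((Equiv.Perm.sign σ : ℤ) : F)
        = ((Equiv.Perm.sign σ : ℤ) : F) * ((Equiv.Perm.sign σ : ℤ) : F) * c S α σ := by ring
      _ = c S α σ := by rw [hu, one_mul]

theorem tensSub_rep {A G : Type*} [Ring A] [Ring G] [Algebra F A] [Algebra F G]
    (p : Submodule F A) (q : Submodule F G) {x : A ⊗[F] G} (hx : x ∈ tensSub F p q) :
    ∃ cf : (A ⊗[F] G) →₀ F,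
      (↑cf.support ⊆ {t : A ⊗[F] G | ∃ aa ∈ p, ∃ gg ∈ q, aa ⊗ₜ[F] gg = t}) ∧
      x = ∑ t ∈ cf.support, cf t • t := by
  rw [tensSub, TensorProduct.range_map_eq_span_tmul] at hx
  have hset : {t : A ⊗[F] G | ∃ (m : p) (n : q), (p.subtype m) ⊗ₜ[F] (q.subtype n) = t}
      ⊆ {t : A ⊗[F] G | ∃ aa ∈ p, ∃ gg ∈ q, aa ⊗ₜ[F] gg = t} := by
    rintro t ⟨m, n, rfl⟩
    exact ⟨m, m.2, n, n.2, rfl⟩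
  rw [Submodule.mem_span_set] at hx
  obtain ⟨cf, hsupp, hsum⟩ := hx
  refine ⟨cf, subset_trans hsupp hset, ?_⟩
  rw [← hsum]
  rfl

end AuxEval


section AuxFinal

theorem eprod_ne_zero (s : ℕ) :
    (List.ofFn fun j : Fin s => ExteriorAlgebra.ι F (Finsupp.single (j : ℕ) (1 : F))).prod
      ≠ (0 : Grass F ℕ) := by
  classical
  intro hzero
  let L : (ℕ →₀ F) →ₗ[F] (Fin s → F) := LinearMap.pi fun j : Fin s => Finsupp.lapply ((j : ℕ))
  let Φ : (ℕ →₀ F) [⋀^Fin s]→ₗ[F] F :=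
    (Matrix.detRowAlternating (n := Fin s) (R := F)).compLinearMap L
  let f : ∀ i : ℕ, (ℕ →₀ F) [⋀^Fin i]→ₗ[F] F :=
    Function.update (fun i => (0 : (ℕ →₀ F) [⋀^Fin i]→ₗ[F] F)) s Φ
  have h1 := ExteriorAlgebra.liftAlternating_apply_ιMulti (R := F) f
    (fun j : Fin s => Finsupp.single (j : ℕ) (1 : F))
  have hE : ExteriorAlgebra.ιMulti F s (fun j : Fin s => Finsupp.single (j : ℕ) (1 : F))
      = (List.ofFn fun j : Fin s => ExteriorAlgebra.ι F (Finsupp.single (j : ℕ) (1 : F))).prod :=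
    ExteriorAlgebra.ιMulti_apply _
  rw [hE, hzero, map_zero] at h1
  have h2 : f s = Φ := by
    show Function.update (fun i => (0 : (ℕ →₀ F) [⋀^Fin i]→ₗ[F] F)) s Φ s = Φ
    simp
  rw [h2] at h1
  have h3 : Φ (fun j : Fin s => Finsupp.single (j : ℕ) (1 : F)) = 1 := by
    show Matrix.detRowAlternating
      (fun j : Fin s => L (Finsupp.single (j : ℕ) (1 : F))) = 1
    have hid : (fun j : Fin s => L (Finsupp.single (j : ℕ) (1 : F)))
        = (1 : Matrix (Fin s) (Fin s) F) := by
      funext i k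
      by_cases hik : i = k <;>
        simp [L, Finsupp.single_apply, Matrix.one_apply, hik, Fin.val_inj]
    rw [hid]
    exact Matrix.det_one
  rw [h3] at h1
  exact one_ne_zero h1.symm

end AuxFinal

set_option maxHeartbeats 1000000 in
/-- a multilinear ℤ₂-graded polynomial `f` (coefficients `c`) is a graded
polynomial identity of `A` if and only if `f*` is a graded polynomial identity of the
Grassmann envelope `G(A) = A⁰⊗G⁰ ⊕ A¹⊗G¹` (with its grading by the two summands). -/



theorem gml_identity_iff_star_identity_grassEnv [CharZero F]
    (A : Type*) [Ring A] [Algebra F A] (𝒜 : ZMod 2 → Submodule F A) [GradedAlgebra 𝒜]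
    (r s : ℕ)
    (c : (Fin (r + s) → Bool) → Equiv.Perm (Fin r) → Equiv.Perm (Fin s) → F)
    (hc : ∀ S α σ, c S α σ ≠ 0 → (Finset.univ.filter fun p => S p = true).card = s) :
    (∀ (a : Fin r → A) (b : Fin s → A), (∀ i, a i ∈ 𝒜 0) → (∀ j, b j ∈ 𝒜 1) →
        gmlEval F r s c a b = 0) ↔
      (∀ (x : Fin r → A ⊗[F] Grass F ℕ) (y : Fin s → A ⊗[F] Grass F ℕ),
        (∀ i, x i ∈ tensSub F (𝒜 0) (grassPart F ℕ 0)) →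
        (∀ j, y j ∈ tensSub F (𝒜 1) (grassPart F ℕ 1)) →
        gmlEval F r s (starCoeff F c) x y = 0)  := by
  classical
  have hcStar : ∀ S α σ, starCoeff F c S α σ ≠ 0 → oddCount S = s := by
    intro S α σ hne
    refine hc S α σ (fun h0 => hne ?_)
    simp [starCoeff, h0]
  have hc' : ∀ S α σ, c S α σ ≠ 0 → oddCount S = s := hc
  constructor
  · intro H x y hx hy
    rw [gmlEval_eq_gmlMap F hcStar]
    let Part : Fin r ⊕ Fin s → Submodule F A := Sum.elim (fun _ => 𝒜 0) (fun _ => 𝒜 1)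
    let GPart : Fin r ⊕ Fin s → Submodule F (Grass F ℕ) :=
      Sum.elim (fun _ => grassPart F ℕ 0) (fun _ => grassPart F ℕ 1)
    have hmem : ∀ k, Sum.elim x y k ∈ tensSub F (Part k) (GPart k) := by
      intro k
      cases k with
      | inl i => exact hx i
      | inr j => exact hy j
    choose cf hsupp hrep using fun k => tensSub_rep F (Part k) (GPart k) (hmem k)
    have hfun : Sum.elim x y = fun k => ∑ t ∈ (cf k).support, cf k t • t := funext hrep
    rw [hfun, (gmlMap F r s (starCoeff F c)).map_sum_finset
      (fun k t => cf k t • t) (fun k => (cf k).support)]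
    apply Finset.sum_eq_zero
    intro ρ hρ
    rw [Fintype.mem_piFinset] at hρ
    have hpure : ∀ k, ∃ aa ∈ Part k, ∃ gg ∈ GPart k, aa ⊗ₜ[F] gg = ρ k :=
      fun k => hsupp k (hρ k)
    choose aa haa gg hgg htens using hpure
    have h1 : (fun k => cf k (ρ k) • ρ k) = fun k => cf k (ρ k) • (aa k ⊗ₜ[F] gg k) := by
      funext k
      rw [htens k]
    rw [h1, MultilinearMap.map_smul_univ]
    have h2 : (fun k => aa k ⊗ₜ[F] gg k)
        = Sum.elim (fun i => aa (Sum.inl i) ⊗ₜ[F] gg (Sum.inl i))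
                   (fun j => aa (Sum.inr j) ⊗ₜ[F] gg (Sum.inr j)) := by
      funext k
      cases k <;> rfl
    have hval : gmlMap F r s (starCoeff F c)
        (Sum.elim (fun i => aa (Sum.inl i) ⊗ₜ[F] gg (Sum.inl i))
          (fun j => aa (Sum.inr j) ⊗ₜ[F] gg (Sum.inr j))) = 0 := by
      rw [← gmlEval_eq_gmlMap F hcStar,
        gmlEval_pure F r s c hc _ _ _ _ (fun i => hgg (Sum.inl i)) (fun j => hgg (Sum.inr j)),
        H _ _ (fun i => haa (Sum.inl i)) (fun j => haa (Sum.inr j)),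
        TensorProduct.zero_tmul]
    rw [h2, hval, smul_zero]
  · intro H a b ha hb
    let e : Fin s → Grass F ℕ := fun j => ExteriorAlgebra.ι F (Finsupp.single (j : ℕ) (1 : F))
    have he : ∀ j, e j ∈ grassPart F ℕ 1 :=
      fun j => CliffordAlgebra.ι_mem_evenOdd_one _ _
    have hone : (1 : Grass F ℕ) ∈ grassPart F ℕ 0 := by
      have := SetLike.algebraMap_mem_graded
        (CliffordAlgebra.evenOdd (0 : QuadraticForm F (ℕ →₀ F))) (1 : F)
      simpa [grassPart] using this
    have hx : ∀ i, (a i ⊗ₜ[F] (1 : Grass F ℕ)) ∈ tensSub F (𝒜 0) (grassPart F ℕ 0) :=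
      fun i => ⟨(⟨a i, ha i⟩ : 𝒜 0) ⊗ₜ[F] (⟨1, hone⟩ : grassPart F ℕ 0), rfl⟩
    have hy : ∀ j, (b j ⊗ₜ[F] e j) ∈ tensSub F (𝒜 1) (grassPart F ℕ 1) :=
      fun j => ⟨(⟨b j, hb j⟩ : 𝒜 1) ⊗ₜ[F] (⟨e j, he j⟩ : grassPart F ℕ 1), rfl⟩
    have h0 := H (fun i => a i ⊗ₜ[F] (1 : Grass F ℕ)) (fun j => b j ⊗ₜ[F] e j) hx hy
    rw [gmlEval_pure F r s c hc a b (fun _ => 1) e (fun _ => hone) he] at h0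
    have hones : (List.ofFn fun _ : Fin r => (1 : Grass F ℕ)).prod = 1 := by simp
    rw [hones, one_mul] at h0
    by_contra hne
    obtain ⟨φ, hφ⟩ : ∃ φ : Module.Dual F A, φ (gmlEval F r s c a b) ≠ 0 := by
      by_contra hall
      push_neg at hall
      exact hne ((Module.forall_dual_apply_eq_zero_iff F _).mp hall)
    have h4 : φ (gmlEval F r s c a b) • (List.ofFn e).prod = 0 := by
      have h := congrArg (TensorProduct.lift ((LinearMap.lsmul F (Grass F ℕ)).comp φ)) h0
      rwa [map_zero, TensorProduct.lift.tmul, LinearMap.comp_apply,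
        LinearMap.lsmul_apply] at h
    exact eprod_ne_zero F s ((smul_eq_zero.mp h4).resolve_left hφ)
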